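/- Define ε₂(k,λ) = λ e^{-λ/k} + (λ − k)(1 − e^{-λ/k}) for real k, λ > 0. Then for every fixed λ > 0, the function k ↦ ε₂(k,λ) is strictly decreasing on (0, ∞). -/

import Mathlib

/-- `ε₂(k,λ) = λ e^{-λ/k} + (λ − k)(1 − e^{-λ/k})`. -/
noncomputable def eps2 (k lam : ℝ) : ℝ :=
  lam * Real.exp (-(lam / k)) + (lam - k) * (1 - Real.exp (-(lam / k)))

lemma eps2_hasDerivAt (lam : ℝ) (x : ℝ) (hx : 0 < x) :
    HasDerivAt (fun k => eps2 k lam)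
      (-1 + (Real.exp (-(lam / x)) + x * (Real.exp (-(lam / x)) * (lam / x ^ 2)))) x := by
  have hne : x ≠ 0 := hx.ne'
  have hinv : HasDerivAt (fun k : ℝ => lam / k) (-(lam / x ^ 2)) x := by
    have := (hasDerivAt_inv hne).const_mul lam
    simpa [div_eq_mul_inv, mul_comm, mul_left_comm, neg_div] using this
  have hexp : HasDerivAt (fun k : ℝ => Real.exp (-(lam / k)))
      (Real.exp (-(lam / x)) * (lam / x ^ 2)) x := by
    have := hinv.neg.exp
    simpa using this
  have hmul : HasDerivAt (fun k : ℝ => k * Real.exp (-(lam / k)))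
      (1 * Real.exp (-(lam / x)) + x * (Real.exp (-(lam / x)) * (lam / x ^ 2))) x :=
    (hasDerivAt_id x).mul hexp
  have hg : HasDerivAt (fun k : ℝ => lam - k + k * Real.exp (-(lam / k)))
      (-1 + (Real.exp (-(lam / x)) + x * (Real.exp (-(lam / x)) * (lam / x ^ 2)))) x := by
    have := ((hasDerivAt_const x lam).sub (hasDerivAt_id x)).add hmul
    simp only [zero_sub, one_mul] at this
    exact this
  have heq : (fun k => eps2 k lam) = (fun k : ℝ => lam - k + k * Real.exp (-(lam / k))) := by
    funext k; simp only [eps2]; ring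
  rw [heq]
  exact hg

/-- For every fixed `λ > 0`, the function `k ↦ ε₂(k,λ)` is strictly decreasing
    on `(0, ∞)`. -/
theorem stmt_6 (lam : ℝ) (hlam : 0 < lam) :
    StrictAntiOn (fun k => eps2 k lam) (Set.Ioi (0 : ℝ)) := by
  apply strictAntiOn_of_deriv_neg (convex_Ioi 0)
  · intro x hx
    exact (eps2_hasDerivAt lam x hx).continuousAt.continuousWithinAt
  · intro x hx
    rw [interior_Ioi] at hx
    rw [(eps2_hasDerivAt lam x hx).deriv]
    set t := lam / x with ht
    have htpos : 0 < t := div_pos hlam hx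
    have hxt : x * (Real.exp (-t) * (lam / x ^ 2)) = Real.exp (-t) * t := by
      field_simp [ht, (show (0:ℝ) < x from hx).ne']
      ring
      rw [ht]; field_simp [(show (0:ℝ) < x from hx).ne']
    rw [hxt]
    have hlt : t + 1 < Real.exp t := Real.add_one_lt_exp htpos.ne'
    have hE : 0 < Real.exp t := Real.exp_pos t
    have key : Real.exp (-t) + Real.exp (-t) * t = (1 + t) / Real.exp t := by
      rw [Real.exp_neg]; field_simp
    have : Real.exp (-t) + Real.exp (-t) * t < 1 := by
      rw [key]; exact (div_lt_one hE).mpr (by linarith)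
    linarith
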